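/- Let ρ be a finite positive Borel measure on ℝ with ρ(I) = 0 for an open interval I. Then F(x) = a + x + ∫ (1+sx)/(s-x) dρ(s) is well-defined, differentiable, and strictly increasing on I, with F'(x) = 1 + ∫ (s²+1)/(s-x)² dρ(s) for x ∈ I whenever this integral is finite on I. -/

import Mathlib

open MeasureTheory Set

-- key distance lemma
private lemma key_dist {c d x₀ s x : ℝ} (hx₀ : x₀ ∈ Ioo c d) (hs : s ∉ Ioo c d)
    (hx : |x - x₀| ≤ min (x₀ - c) (d - x₀) / 2) :
    |s - x₀| / 2 ≤ |s - x| ∧ min (x₀ - c) (d - x₀) ≤ |s - x₀| := by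
  obtain ⟨hc, hd⟩ := hx₀
  set δ := min (x₀ - c) (d - x₀) with hδdef
  have hδ : δ ≤ |s - x₀| := by
    have hcase : s ≤ c ∨ d ≤ s := by
      by_contra h
      push_neg at h
      exact hs ⟨h.1, h.2⟩
    rcases hcase with h | h
    · have h1 : δ ≤ x₀ - c := min_le_left _ _
      rw [le_abs]
      right; linarith
    · have h1 : δ ≤ d - x₀ := min_le_right _ _
      rw [le_abs]
      left; linarith
  have h2 : |s - x₀| - |x - x₀| ≤ |s - x| := by
    have := abs_sub_abs_le_abs_sub (s - x₀) (x - x₀)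
    have he : s - x₀ - (x - x₀) = s - x := by ring
    rw [he] at this
    linarith
  exact ⟨by linarith, hδ⟩

theorem stmt_12 (ρ : Measure ℝ) [IsFiniteMeasure ρ] (a c d : ℝ) (hcd : c < d)
    (hρI : ρ (Ioo c d) = 0)
    (hfin : ∀ x ∈ Ioo c d,
      (∫⁻ s : ℝ, ENNReal.ofReal ((s ^ 2 + 1) / (s - x) ^ 2) ∂ρ) ≠ ⊤)
    (F : ℝ → ℝ)
    (hF : ∀ x ∈ Ioo c d, F x = a + x + ∫ s : ℝ, (1 + s * x) / (s - x) ∂ρ) :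
    StrictMonoOn F (Ioo c d) ∧
      ∀ x ∈ Ioo c d,
        HasDerivAt F (1 + ∫ s : ℝ, (s ^ 2 + 1) / (s - x) ^ 2 ∂ρ) x := by
  have hae : ∀ᵐ s ∂ρ, s ∉ Ioo c d := measure_eq_zero_iff_ae_notMem.mp hρI
  -- main derivative claim
  have hderiv : ∀ x ∈ Ioo c d,
      HasDerivAt F (1 + ∫ s : ℝ, (s ^ 2 + 1) / (s - x) ^ 2 ∂ρ) x := by
    intro x₀ hx₀
    obtain ⟨hc, hd⟩ := hx₀
    set δ := min (x₀ - c) (d - x₀) with hδdef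
    have hδpos : 0 < δ := lt_min (by linarith) (by linarith)
    set ε := δ / 2 with hεdef
    have hεpos : 0 < ε := by positivity
    -- derivative of the integral part
    have hmain : HasDerivAt (fun x => ∫ s : ℝ, (1 + s * x) / (s - x) ∂ρ)
        (∫ s : ℝ, (s ^ 2 + 1) / (s - x₀) ^ 2 ∂ρ) x₀ := by
      have hkey : ∀ s ∉ Ioo c d, ∀ x ∈ Metric.ball x₀ ε,
          |s - x₀| / 2 ≤ |s - x| ∧ δ ≤ |s - x₀| := by
        intro s hs x hx
        rw [Metric.mem_ball, Real.dist_eq] at hx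
        exact key_dist ⟨hc, hd⟩ hs hx.le
      have hmeas : ∀ x : ℝ, AEStronglyMeasurable (fun s : ℝ => (1 + s * x) / (s - x)) ρ := by
        intro x
        exact (Measurable.div (by fun_prop) (by fun_prop)).aestronglyMeasurable
      have hFint : Integrable (fun s : ℝ => (1 + s * x₀) / (s - x₀)) ρ := by
        refine Integrable.mono' (integrable_const (|x₀| + (1 + x₀ ^ 2) / δ)) (hmeas x₀) ?_
        filter_upwards [hae] with s hs
        obtain ⟨_, hδs⟩ := hkey s hs x₀ (Metric.mem_ball_self hεpos)
        have hne : s - x₀ ≠ 0 := by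
          intro h
          rw [h] at hδs
          simp at hδs
          linarith
        have heq : (1 + s * x₀) / (s - x₀) = x₀ + (1 + x₀ ^ 2) / (s - x₀) := by
          field_simp
          ring
        rw [Real.norm_eq_abs, heq]
        calc |x₀ + (1 + x₀ ^ 2) / (s - x₀)| ≤ |x₀| + |(1 + x₀ ^ 2) / (s - x₀)| := abs_add_le _ _
          _ = |x₀| + (1 + x₀ ^ 2) / |s - x₀| := by rw [abs_div, abs_of_nonneg (show (0:ℝ) ≤ 1 + x₀ ^ 2 by positivity)]
          _ ≤ |x₀| + (1 + x₀ ^ 2) / δ := by gcongr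
      have hF'meas : AEStronglyMeasurable (fun s : ℝ => (s ^ 2 + 1) / (s - x₀) ^ 2) ρ :=
        (Measurable.div (by fun_prop) (by fun_prop)).aestronglyMeasurable
      have hgmeas : Measurable (fun s : ℝ => (s ^ 2 + 1) / (s - x₀) ^ 2) :=
        Measurable.div (by fun_prop) (by fun_prop)
      have hbd_int : Integrable (fun s : ℝ => 4 * ((s ^ 2 + 1) / (s - x₀) ^ 2)) ρ := by
        constructor
        · exact (hgmeas.const_mul 4).aestronglyMeasurable
        · rw [hasFiniteIntegral_iff_ofReal (Filter.Eventually.of_forall fun s => by positivity)]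
          have : ∀ s : ℝ, ENNReal.ofReal (4 * ((s ^ 2 + 1) / (s - x₀) ^ 2))
              = 4 * ENNReal.ofReal ((s ^ 2 + 1) / (s - x₀) ^ 2) := by
            intro s
            rw [ENNReal.ofReal_mul (by norm_num)]
            norm_num
          simp_rw [this]
          rw [lintegral_const_mul _ hgmeas.ennreal_ofReal]
          exact ENNReal.mul_lt_top (by simp) (lt_top_iff_ne_top.2 (hfin x₀ ⟨hc, hd⟩))
      have hbound : ∀ᵐ s ∂ρ, ∀ x ∈ Metric.ball x₀ ε,
          ‖(s ^ 2 + 1) / (s - x) ^ 2‖ ≤ 4 * ((s ^ 2 + 1) / (s - x₀) ^ 2) := by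
        filter_upwards [hae] with s hs x hx
        obtain ⟨h1, h2⟩ := hkey s hs x hx
        have hne : s - x₀ ≠ 0 := by
          intro h
          rw [h] at h2; simp at h2; linarith
        have hsq : (s - x₀) ^ 2 / 4 ≤ (s - x) ^ 2 := by
          have := pow_le_pow_left₀ (by positivity : (0:ℝ) ≤ |s - x₀| / 2) h1 2
          calc (s - x₀) ^ 2 / 4 = (|s - x₀| / 2) ^ 2 := by rw [div_pow, sq_abs]; norm_num
            _ ≤ |s - x| ^ 2 := this
            _ = (s - x) ^ 2 := sq_abs _
        have hpos : 0 < (s - x₀) ^ 2 / 4 := by positivity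
        rw [Real.norm_eq_abs, abs_of_nonneg (by positivity)]
        calc (s ^ 2 + 1) / (s - x) ^ 2 ≤ (s ^ 2 + 1) / ((s - x₀) ^ 2 / 4) :=
              div_le_div_of_nonneg_left (by positivity) hpos hsq
          _ = 4 * ((s ^ 2 + 1) / (s - x₀) ^ 2) := by field_simp
      have hdiff : ∀ᵐ s ∂ρ, ∀ x ∈ Metric.ball x₀ ε,
          HasDerivAt (fun x => (1 + s * x) / (s - x)) ((s ^ 2 + 1) / (s - x) ^ 2) x := by
        filter_upwards [hae] with s hs x hx
        obtain ⟨h1, h2⟩ := hkey s hs x hx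
        have hne : s - x ≠ 0 := by
          intro h
          rw [h] at h1
          simp at h1
          have : |s - x₀| = 0 := le_antisymm (by linarith) (abs_nonneg _)
          rw [this] at h2; linarith
        have hu : HasDerivAt (fun y : ℝ => 1 + s * y) s x := by
          simpa using ((hasDerivAt_id x).const_mul s).const_add 1
        have hv : HasDerivAt (fun y : ℝ => s - y) (-1) x := by
          simpa using (hasDerivAt_id x).const_sub s
        have := hu.div hv hne
        simp only [Pi.div_def] at this
        refine this.congr_deriv ?_
        ring
      exact (hasDerivAt_integral_of_dominated_loc_of_deriv_le (Metric.ball_mem_nhds x₀ hεpos)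
        (Filter.Eventually.of_forall hmeas) hFint hF'meas hbound hbd_int hdiff).2
    have hG : HasDerivAt (fun x => a + x + ∫ s : ℝ, (1 + s * x) / (s - x) ∂ρ)
        (1 + ∫ s : ℝ, (s ^ 2 + 1) / (s - x₀) ^ 2 ∂ρ) x₀ := by
      simpa [Pi.add_def] using (((hasDerivAt_id x₀).const_add a).add hmain)
    refine hG.congr_of_eventuallyEq ?_
    filter_upwards [Ioo_mem_nhds hc hd] with y hy
    exact hF y hy
  refine ⟨?_, hderiv⟩
  have hpos : ∀ x ∈ Ioo c d, 0 < 1 + ∫ s : ℝ, (s ^ 2 + 1) / (s - x) ^ 2 ∂ρ := by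
    intro x hx
    have : 0 ≤ ∫ s : ℝ, (s ^ 2 + 1) / (s - x) ^ 2 ∂ρ :=
      integral_nonneg fun s => by positivity
    linarith
  apply StrictMonoOn.mono (s := Ioo c d) ?_ (le_refl _)
  apply strictMonoOn_of_deriv_pos (convex_Ioo c d)
  · intro x hx
    exact (hderiv x hx).continuousAt.continuousWithinAt
  · intro x hx
    rw [interior_Ioo] at hx
    rw [(hderiv x hx).deriv]
    exact hpos x hx
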